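/- Let n ≥ 3 and k ≥ 1. If a linear map L = (L_1,...,L_k) : ℝⁿ → (ℝⁿ)^k satisfies ‖L‖ⁿ = Σ_{i=1}^k det L_i, then L is conformal and there exists an index i_0 ∈ {1,...,k} such that L_{i_0} is conformal and L_i = 0 for all i ≠ i_0. -/

import Mathlib

open Finset



lemma hadamard_det {n : ℕ} {E : Type*} [NormedAddCommGroup E] [InnerProductSpace ℝ E]
    [FiniteDimensional ℝ E] (h : Module.finrank ℝ E = Fintype.card (Fin n))
    (b : OrthonormalBasis (Fin n) ℝ E) (f : Fin n → E) :
    |b.toBasis.det f| ≤ ∏ i, ‖f i‖ := by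
  haveI : WellFoundedLT (Fin n) := inferInstance
  set g : OrthonormalBasis (Fin n) ℝ E := InnerProductSpace.gramSchmidtOrthonormalBasis h f with hgdef
  have hg : g.toBasis.det f = ∏ i, (inner ℝ (g i) (f i) : ℝ) :=
    InnerProductSpace.gramSchmidtOrthonormalBasis_det h f
  have h1 : b.toBasis.det = b.toBasis.det g.toBasis • g.toBasis.det :=
    (b.toBasis.det).eq_smul_basis_det g.toBasis
  have h2 : b.toBasis.det f = b.toBasis.det ⇑g.toBasis * g.toBasis.det f := by
    conv_lhs => rw [h1]
    simp [smul_eq_mul]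
  have h3 : |b.toBasis.det ⇑g.toBasis| = 1 := by
    rw [OrthonormalBasis.coe_toBasis, ← Real.norm_eq_abs]
    exact OrthonormalBasis.det_to_matrix_orthonormalBasis (𝕜 := ℝ) b g
  rw [h2, abs_mul, h3, one_mul, hg]
  calc |∏ i, (inner ℝ (g i) (f i) : ℝ)| ≤ ∏ i, |(inner ℝ (g i) (f i) : ℝ)| := by
        exact le_of_eq (Finset.abs_prod _ _)
    _ ≤ ∏ i, ‖f i‖ := by
        apply Finset.prod_le_prod (fun i _ => abs_nonneg _)
        intro i _
        calc |(inner ℝ (g i) (f i) : ℝ)| ≤ ‖g i‖ * ‖f i‖ := abs_real_inner_le_norm _ _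
          _ = ‖f i‖ := by rw [g.orthonormal.1 i, one_mul]

lemma hadamard_det_map {n : ℕ} {E : Type*} [NormedAddCommGroup E] [InnerProductSpace ℝ E]
    [FiniteDimensional ℝ E] (h : Module.finrank ℝ E = Fintype.card (Fin n))
    (b : OrthonormalBasis (Fin n) ℝ E) (A : E →ₗ[ℝ] E) :
    LinearMap.det A ≤ ∏ i, ‖A (b i)‖ := by
  have h1 : b.toBasis.det (⇑A ∘ ⇑b.toBasis) = LinearMap.det A := by
    rw [Module.Basis.det_comp, Module.Basis.det_self, mul_one]
  calc LinearMap.det A ≤ |LinearMap.det A| := le_abs_self _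
    _ = |b.toBasis.det (⇑A ∘ ⇑b.toBasis)| := by rw [h1]
    _ ≤ ∏ i, ‖(⇑A ∘ ⇑b.toBasis) i‖ := hadamard_det h b _
    _ = ∏ i, ‖A (b i)‖ := by simp [OrthonormalBasis.coe_toBasis]


lemma prod_eq_of_le_of_ge {n : ℕ} (x : Fin n → ℝ) (M : ℝ) (hM : 0 < M)
    (h0 : ∀ i, 0 ≤ x i) (hle : ∀ i, x i ≤ M) (h : M ^ n ≤ ∏ i, x i) :
    ∀ i, x i = M := by
  intro i
  by_contra hne
  have hi : x i < M := lt_of_le_of_ne (hle i) hne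
  have h1 : ∏ j, x j ≤ x i * M ^ (n - 1) := by
    rw [← Finset.mul_prod_erase Finset.univ x (Finset.mem_univ i)]
    have h2 : ∏ j ∈ Finset.univ.erase i, x j ≤ ∏ _j ∈ Finset.univ.erase i, M :=
      Finset.prod_le_prod (fun j _ => h0 j) (fun j _ => hle j)
    rw [Finset.prod_const, Finset.card_erase_of_mem (Finset.mem_univ i),
      Finset.card_univ, Fintype.card_fin] at h2
    exact mul_le_mul_of_nonneg_left h2 (h0 i)
  have h2 : x i * M ^ (n - 1) < M * M ^ (n - 1) :=
    mul_lt_mul_of_pos_right hi (pow_pos hM _)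
  have h3 : M * M ^ (n - 1) = M ^ n := by
    rw [← pow_succ']
    congr 1
    have : 1 ≤ n := Fin.pos_iff_nonempty.mpr ⟨i⟩
    omega
  linarith

lemma lp_le_aux {k n : ℕ} (hn : 2 ≤ n) (x : Fin k → ℝ) (h0 : ∀ i, 0 ≤ x i) {s : ℝ}
    (hs : 0 ≤ s) (hsum : ∑ i, x i ^ 2 ≤ s ^ 2) : ∑ i, x i ^ n ≤ s ^ n := by
  obtain ⟨m, rfl⟩ : ∃ m, n = 2 + m := ⟨n - 2, by omega⟩
  have hxle : ∀ i, x i ≤ s := by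
    intro i
    have h1 : x i ^ 2 ≤ s ^ 2 :=
      le_trans (Finset.single_le_sum (f := fun i => x i ^ 2) (fun i _ => sq_nonneg _)
        (Finset.mem_univ i)) hsum
    exact le_of_pow_le_pow_left₀ two_ne_zero hs h1
  calc ∑ i, x i ^ (2 + m) = ∑ i, x i ^ 2 * x i ^ m := by
        simp_rw [pow_add]
    _ ≤ ∑ i, x i ^ 2 * s ^ m := by
        refine Finset.sum_le_sum fun i _ => ?_
        exact mul_le_mul_of_nonneg_left (pow_le_pow_left₀ (h0 i) (hxle i) m) (sq_nonneg _)
    _ = (∑ i, x i ^ 2) * s ^ m := by rw [← Finset.sum_mul]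
    _ ≤ s ^ 2 * s ^ m := mul_le_mul_of_nonneg_right hsum (pow_nonneg hs m)
    _ = s ^ (2 + m) := by rw [pow_add]

lemma lp_eq_unique {k n : ℕ} (hn : 3 ≤ n) (x : Fin k → ℝ) (h0 : ∀ i, 0 ≤ x i) {M : ℝ}
    (hM : 0 < M) (hsum2 : ∑ i, x i ^ 2 = M ^ 2) (hsumn : ∑ i, x i ^ n = M ^ n) :
    ∀ p q, x p ≠ 0 → x q ≠ 0 → p = q := by
  intro p q hp hq
  by_contra hne
  obtain ⟨m, hm1, rfl⟩ : ∃ m, 1 ≤ m ∧ n = 2 + m := ⟨n - 2, by omega, by omega⟩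
  have hxle : ∀ i, x i ≤ M := by
    intro i
    have h1 : x i ^ 2 ≤ M ^ 2 :=
      hsum2 ▸ Finset.single_le_sum (f := fun i => x i ^ 2) (fun i _ => sq_nonneg _)
        (Finset.mem_univ i)
    exact le_of_pow_le_pow_left₀ two_ne_zero hM.le h1
  have hpq : x p ^ 2 + x q ^ 2 ≤ M ^ 2 := by
    have h := Finset.sum_le_sum_of_subset_of_nonneg (f := fun i => x i ^ 2)
      (Finset.subset_univ ({p, q} : Finset (Fin k))) (fun i _ _ => sq_nonneg _)
    rw [Finset.sum_pair hne, hsum2] at h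
    exact h
  have hxp : x p < M := by
    have hq2 : 0 < x q ^ 2 := pow_pos (lt_of_le_of_ne (h0 q) (Ne.symm hq)) 2
    nlinarith [h0 p, hxle p]
  have hstrict : ∑ i, x i ^ (2 + m) < M ^ (2 + m) := by
    have hterm : ∀ i ∈ Finset.univ, x i ^ (2 + m) ≤ x i ^ 2 * M ^ m := by
      intro i _
      rw [pow_add]
      exact mul_le_mul_of_nonneg_left (pow_le_pow_left₀ (h0 i) (hxle i) m) (sq_nonneg _)
    have hp' : x p ^ (2 + m) < x p ^ 2 * M ^ m := by
      rw [pow_add]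
      have hxp0 : 0 < x p := lt_of_le_of_ne (h0 p) (Ne.symm hp)
      exact mul_lt_mul_of_pos_left (pow_lt_pow_left₀ hxp (h0 p) (by omega)) (pow_pos hxp0 2)
    calc ∑ i, x i ^ (2 + m) < ∑ i, x i ^ 2 * M ^ m :=
          Finset.sum_lt_sum hterm ⟨p, Finset.mem_univ p, hp'⟩
      _ = (∑ i, x i ^ 2) * M ^ m := by rw [← Finset.sum_mul]
      _ = M ^ (2 + m) := by rw [hsum2, pow_add]
  exact absurd hsumn (ne_of_lt hstrict)

lemma rigidity {n : ℕ} (hn : 1 ≤ n) {M : ℝ} (hM : 0 < M)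
    (A : EuclideanSpace ℝ (Fin n) →L[ℝ] EuclideanSpace ℝ (Fin n))
    (hA : ∀ v, ‖A v‖ ≤ M * ‖v‖)
    (hdet : LinearMap.det (A : EuclideanSpace ℝ (Fin n) →ₗ[ℝ] EuclideanSpace ℝ (Fin n)) = M ^ n) :
    ∀ v, ‖A v‖ = M * ‖v‖ := by
  have hcard : Module.finrank ℝ (EuclideanSpace ℝ (Fin n)) = Fintype.card (Fin n) := by
    simp [finrank_euclideanSpace_fin]
  -- first, for unit vectors
  have hunit : ∀ u : EuclideanSpace ℝ (Fin n), ‖u‖ = 1 → ‖A u‖ = M := by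
    intro u hu
    set z : Fin n := ⟨0, by omega⟩ with hz
    have hi0 : z ∈ ({z} : Set (Fin n)) := rfl
    have horth : Orthonormal ℝ (Set.restrict ({z} : Set (Fin n)) (fun _ => u)) := by
      constructor
      · intro i; exact hu
      · intro i j hij
        exact absurd (Subtype.ext ((i.2 : (i : Fin n) ∈ ({z} : Set (Fin n))).trans
          ((j.2 : (j : Fin n) ∈ ({z} : Set (Fin n))).symm))) hij
    obtain ⟨b, hb⟩ := horth.exists_orthonormalBasis_extension_of_card_eq hcard
    have hb0 : b z = u := hb z hi0
    have hle : ∀ i, ‖A (b i)‖ ≤ M := by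
      intro i
      have := hA (b i)
      rwa [b.orthonormal.1 i, mul_one] at this
    have hprod : M ^ n ≤ ∏ i, ‖A (b i)‖ := by
      rw [← hdet]
      exact hadamard_det_map hcard b _
    have := prod_eq_of_le_of_ge (fun i => ‖A (b i)‖) M hM (fun i => norm_nonneg _) hle hprod z
    rwa [hb0] at this
  intro v
  rcases eq_or_ne v 0 with rfl | hv
  · simp
  · have hvn : ‖v‖ ≠ 0 := norm_ne_zero_iff.mpr hv
    have hu : ‖(‖v‖⁻¹ • v : EuclideanSpace ℝ (Fin n))‖ = 1 := by
      rw [norm_smul, norm_inv, norm_norm, inv_mul_cancel₀ hvn]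
    have h1 := hunit _ hu
    rw [map_smul, norm_smul, norm_inv, norm_norm] at h1
    field_simp at h1
    rw [h1, mul_comm]




/-- For `n ≥ 3` and `k ≥ 1`: if a linear map `L = (L₁,…,L_k) : ℝⁿ → (ℝⁿ)^k` satisfies
`‖L‖ⁿ = ∑ᵢ det Lᵢ`, then `L` is conformal and there is an index `i₀` with `L_{i₀}` conformal
and `Lᵢ = 0` for `i ≠ i₀`. -/
theorem vol_times_calibrated_linear_rigidity (n k : ℕ) (hn : 3 ≤ n) (hk : 1 ≤ k)
    (L : EuclideanSpace ℝ (Fin n) →L[ℝ]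
        PiLp 2 (fun _ : Fin k => EuclideanSpace ℝ (Fin n)))
    (Li : Fin k → (EuclideanSpace ℝ (Fin n) →L[ℝ] EuclideanSpace ℝ (Fin n)))
    (hLi : ∀ i v, Li i v = L v i)
    (hL : ‖L‖ ^ n = ∑ i, LinearMap.det
        ((Li i : EuclideanSpace ℝ (Fin n) →ₗ[ℝ] EuclideanSpace ℝ (Fin n)))) :
    (∃ c : ℝ, 0 ≤ c ∧ ∀ v, ‖L v‖ = c * ‖v‖) ∧
    ∃ i₀ : Fin k, (∃ c : ℝ, 0 ≤ c ∧ ∀ v, ‖Li i₀ v‖ = c * ‖v‖) ∧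
      ∀ i, i ≠ i₀ → Li i = 0 := by
  classical
  haveI : Nonempty (Fin n) := ⟨⟨0, by omega⟩⟩
  by_cases hM0 : ‖L‖ = 0
  · have hL0 : L = 0 := norm_eq_zero.mp hM0
    have hLi0 : ∀ i, Li i = 0 := by
      intro i
      refine ContinuousLinearMap.ext fun v => ?_
      simp [hLi i v, hL0]
    exact ⟨⟨0, le_refl 0, fun v => by rw [hL0]; simp⟩, ⟨0, hk⟩,
      ⟨0, le_refl 0, fun v => by rw [hLi0]; simp⟩, fun i _ => hLi0 i⟩
  have hM : 0 < ‖L‖ := lt_of_le_of_ne (norm_nonneg L) (Ne.symm hM0)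
  set M := ‖L‖ with hMdef
  have hnz : (n : ℝ) ≠ 0 := Nat.cast_ne_zero.mpr (by omega)
  set e := EuclideanSpace.basisFun (Fin n) ℝ with he
  have hcard : Module.finrank ℝ (EuclideanSpace ℝ (Fin n)) = Fintype.card (Fin n) := by
    simp [finrank_euclideanSpace_fin]
  set a : Fin k → Fin n → ℝ := fun i j => ‖Li i (e j)‖ with ha
  have ha0 : ∀ i j, 0 ≤ a i j := fun i j => norm_nonneg _
  have hnorme : ∀ j, ‖(e j : EuclideanSpace ℝ (Fin n))‖ = 1 := fun j => e.orthonormal.1 j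
  have hLsq : ∀ v, ‖L v‖ ^ 2 = ∑ i, ‖Li i v‖ ^ 2 := by
    intro v
    have h := PiLp.norm_sq_eq_of_L2 (fun _ : Fin k => EuclideanSpace ℝ (Fin n)) (L v)
    simp only [← hLi] at h
    exact h
  have hcol : ∀ j, ∑ i, a i j ^ 2 = ‖L (e j)‖ ^ 2 := by
    intro j
    rw [hLsq (e j)]
  have hLej : ∀ j, ‖L (e j)‖ ≤ M := by
    intro j
    have h := L.le_opNorm (e j)
    rwa [hnorme j, mul_one] at h
  have hHad : ∀ i, LinearMap.det
      ((Li i : EuclideanSpace ℝ (Fin n) →ₗ[ℝ] EuclideanSpace ℝ (Fin n))) ≤ ∏ j, a i j := by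
    intro i
    have h := hadamard_det_map hcard e
      ((Li i : EuclideanSpace ℝ (Fin n) →ₗ[ℝ] EuclideanSpace ℝ (Fin n)))
    simpa [ha] using h
  have hAM : ∀ i, ∏ j, a i j ≤ (n : ℝ)⁻¹ * ∑ j, a i j ^ n := by
    intro i
    have hw' : ∑ _j : Fin n, (n : ℝ)⁻¹ = 1 := by
      rw [Finset.sum_const, Finset.card_univ, Fintype.card_fin, nsmul_eq_mul,
        mul_inv_cancel₀ hnz]
    have h := Real.geom_mean_le_arith_mean_weighted Finset.univ (fun _ => (n : ℝ)⁻¹)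
      (fun j => a i j ^ n) (fun j _ => by positivity) hw'
      (fun j _ => pow_nonneg (ha0 i j) n)
    have hLHS : ∀ j, ((a i j ^ n : ℝ)) ^ ((n : ℝ)⁻¹) = a i j := by
      intro j
      rw [← Real.rpow_natCast (a i j) n, ← Real.rpow_mul (ha0 i j),
        mul_inv_cancel₀ hnz, Real.rpow_one]
    calc ∏ j, a i j = ∏ j, ((a i j ^ n : ℝ)) ^ ((n : ℝ)⁻¹) :=
          Finset.prod_congr rfl fun j _ => (hLHS j).symm
      _ ≤ ∑ j, (n : ℝ)⁻¹ * a i j ^ n := h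
      _ = (n : ℝ)⁻¹ * ∑ j, a i j ^ n := by rw [Finset.mul_sum]
  have hT : ∀ j, ∑ i, a i j ^ n ≤ M ^ n := by
    intro j
    have h1 : ∑ i, a i j ^ n ≤ ‖L (e j)‖ ^ n :=
      lp_le_aux (by omega) (fun i => a i j) (fun i => ha0 i j) (norm_nonneg _)
        (le_of_eq (hcol j))
    exact le_trans h1 (pow_le_pow_left₀ (norm_nonneg _) (hLej j) n)
  have hchain1 : M ^ n ≤ ∑ i, ∏ j, a i j := by
    calc M ^ n = ∑ i, LinearMap.det
          ((Li i : EuclideanSpace ℝ (Fin n) →ₗ[ℝ] EuclideanSpace ℝ (Fin n))) := hL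
      _ ≤ ∑ i, ∏ j, a i j := Finset.sum_le_sum fun i _ => hHad i
  have hchain2 : ∑ i, ∏ j, a i j ≤ (n : ℝ)⁻¹ * ∑ j, ∑ i, a i j ^ n := by
    calc ∑ i, ∏ j, a i j ≤ ∑ i, (n : ℝ)⁻¹ * ∑ j, a i j ^ n :=
          Finset.sum_le_sum fun i _ => hAM i
      _ = (n : ℝ)⁻¹ * ∑ i, ∑ j, a i j ^ n := by rw [← Finset.mul_sum]
      _ = (n : ℝ)⁻¹ * ∑ j, ∑ i, a i j ^ n := by rw [Finset.sum_comm]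
  have hchain3 : ∑ j : Fin n, ∑ i, a i j ^ n ≤ (n : ℝ) * M ^ n := by
    calc ∑ j : Fin n, ∑ i, a i j ^ n ≤ ∑ _j : Fin n, M ^ n :=
          Finset.sum_le_sum fun j _ => hT j
      _ = (n : ℝ) * M ^ n := by
          rw [Finset.sum_const, Finset.card_univ, Fintype.card_fin, nsmul_eq_mul]
  have hS2 : ∑ j : Fin n, ∑ i, a i j ^ n = (n : ℝ) * M ^ n := by
    refine le_antisymm hchain3 ?_
    have h1 : M ^ n ≤ (n : ℝ)⁻¹ * ∑ j, ∑ i, a i j ^ n := le_trans hchain1 hchain2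
    have hn0 : (0 : ℝ) < n := by positivity
    have h2 : (n : ℝ) * M ^ n ≤ (n : ℝ) * ((n : ℝ)⁻¹ * ∑ j, ∑ i, a i j ^ n) :=
      mul_le_mul_of_nonneg_left h1 hn0.le
    rwa [← mul_assoc, mul_inv_cancel₀ hnz, one_mul] at h2
  have hTeq : ∀ j, ∑ i, a i j ^ n = M ^ n := by
    intro j
    by_contra hne
    have hlt : ∑ i, a i j ^ n < M ^ n := lt_of_le_of_ne (hT j) hne
    have h1 : ∑ j' : Fin n, ∑ i, a i j' ^ n < ∑ _j' : Fin n, M ^ n :=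
      Finset.sum_lt_sum (fun j' _ => hT j') ⟨j, Finset.mem_univ j, hlt⟩
    rw [Finset.sum_const, Finset.card_univ, Fintype.card_fin, nsmul_eq_mul, hS2] at h1
    exact lt_irrefl _ h1
  have hLejEq : ∀ j, ‖L (e j)‖ = M := by
    intro j
    refine le_antisymm (hLej j) ?_
    have h1 : M ^ n ≤ ‖L (e j)‖ ^ n := by
      rw [← hTeq j]
      exact lp_le_aux (by omega) (fun i => a i j) (fun i => ha0 i j) (norm_nonneg _)
        (le_of_eq (hcol j))
    exact le_of_pow_le_pow_left₀ (by omega) (norm_nonneg _) h1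
  have hcol2 : ∀ j, ∑ i, a i j ^ 2 = M ^ 2 := by
    intro j
    rw [hcol j, hLejEq j]
  have huniq : ∀ j p q, a p j ≠ 0 → a q j ≠ 0 → p = q := fun j =>
    lp_eq_unique hn (fun i => a i j) (fun i => ha0 i j) hM (hcol2 j) (hTeq j)
  have hS1 : ∑ i, ∏ j, a i j = M ^ n := by
    refine le_antisymm ?_ hchain1
    calc ∑ i, ∏ j, a i j ≤ (n : ℝ)⁻¹ * ∑ j, ∑ i, a i j ^ n := hchain2
      _ = M ^ n := by rw [hS2, ← mul_assoc, inv_mul_cancel₀ hnz, one_mul]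
  have hex : ∃ i₀, ∏ j, a i₀ j ≠ 0 := by
    by_contra h
    push_neg at h
    rw [Finset.sum_eq_zero (fun i _ => h i)] at hS1
    exact absurd hS1.symm (ne_of_gt (pow_pos hM n))
  obtain ⟨i₀, hi₀⟩ := hex
  have hi₀j : ∀ j, a i₀ j ≠ 0 := fun j =>
    Finset.prod_ne_zero_iff.mp hi₀ j (Finset.mem_univ j)
  have hzero : ∀ i, i ≠ i₀ → Li i = 0 := by
    intro i hne
    have hij : ∀ j, Li i (e j) = 0 := by
      intro j
      by_contra hnz'
      have h1 : a i j ≠ 0 := by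
        simp only [ha]
        exact norm_ne_zero_iff.mpr hnz'
      exact hne (huniq j i i₀ h1 (hi₀j j))
    refine ContinuousLinearMap.coe_injective ?_
    refine Module.Basis.ext e.toBasis fun j => ?_
    simp [hij j]
  have hdet0 : ∀ i, i ≠ i₀ → LinearMap.det
      ((Li i : EuclideanSpace ℝ (Fin n) →ₗ[ℝ] EuclideanSpace ℝ (Fin n))) = 0 := by
    intro i hne
    rw [hzero i hne]
    have h1 : (((0 : EuclideanSpace ℝ (Fin n) →L[ℝ] EuclideanSpace ℝ (Fin n)) :
        EuclideanSpace ℝ (Fin n) →ₗ[ℝ] EuclideanSpace ℝ (Fin n))) =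
        (0 : EuclideanSpace ℝ (Fin n) →ₗ[ℝ] EuclideanSpace ℝ (Fin n)) := rfl
    rw [h1]
    exact LinearMap.det_zero' e.toBasis
  have hdeti₀ : LinearMap.det
      ((Li i₀ : EuclideanSpace ℝ (Fin n) →ₗ[ℝ] EuclideanSpace ℝ (Fin n))) = M ^ n := by
    have h := hL
    rw [Finset.sum_eq_single i₀ (fun i _ hne => hdet0 i hne)
      (fun h' => absurd (Finset.mem_univ i₀) h')] at h
    exact h.symm
  have hle' : ∀ v, ‖Li i₀ v‖ ≤ M * ‖v‖ := by
    intro v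
    have h1 : ‖Li i₀ v‖ ^ 2 ≤ ‖L v‖ ^ 2 := by
      rw [hLsq v]
      exact Finset.single_le_sum (f := fun i => ‖Li i v‖ ^ 2) (fun i _ => sq_nonneg _)
        (Finset.mem_univ i₀)
    have h2 : ‖Li i₀ v‖ ≤ ‖L v‖ := le_of_pow_le_pow_left₀ two_ne_zero (norm_nonneg _) h1
    exact le_trans h2 (L.le_opNorm v)
  have hconf : ∀ v, ‖Li i₀ v‖ = M * ‖v‖ := rigidity (by omega) hM (Li i₀) hle' hdeti₀
  have hLconf : ∀ v, ‖L v‖ = M * ‖v‖ := by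
    intro v
    have h1 : ‖L v‖ ^ 2 = (M * ‖v‖) ^ 2 := by
      rw [hLsq v]
      rw [Finset.sum_eq_single i₀ (fun i _ hne => by rw [hzero i hne]; simp)
        (fun h' => absurd (Finset.mem_univ i₀) h')]
      rw [hconf v]
    have h2 : 0 ≤ M * ‖v‖ := mul_nonneg hM.le (norm_nonneg v)
    exact le_antisymm (le_of_pow_le_pow_left₀ two_ne_zero h2 h1.le)
      (le_of_pow_le_pow_left₀ two_ne_zero (norm_nonneg _) h1.ge)
  exact ⟨⟨M, hM.le, hLconf⟩, i₀, ⟨M, hM.le, hconf⟩, hzero⟩
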